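/- Let h, w > 0 and u > 0 with u² ≤ h·w. Then the 2-dimensional Lebesgue measure of the set {(x,y) ∈ [0,w]×[0,h] : x·y ≤ u²} equals u²·(1 + ln(h·w) − ln(u²)). -/

import Mathlib

open MeasureTheory

theorem stmt6 (h w u : ℝ) (hh : 0 < h) (hw : 0 < w) (hu : 0 < u)
    (huhw : u ^ 2 ≤ h * w) :
    volume {p : ℝ × ℝ | p ∈ Set.Icc (0:ℝ) w ×ˢ Set.Icc (0:ℝ) h ∧ p.1 * p.2 ≤ u ^ 2} =
      ENNReal.ofReal (u ^ 2 * (1 + Real.log (h * w) - Real.log (u ^ 2))) := by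
  set S : Set (ℝ × ℝ) :=
    {p : ℝ × ℝ | p ∈ Set.Icc (0:ℝ) w ×ˢ Set.Icc (0:ℝ) h ∧ p.1 * p.2 ≤ u ^ 2} with hS
  have hu2 : (0:ℝ) < u ^ 2 := pow_pos hu 2
  set a : ℝ := u ^ 2 / h with ha_def
  have ha : 0 < a := div_pos hu2 hh
  have haw : a ≤ w := (div_le_iff₀ hh).2 (by linarith [huhw])
  have hSmeas : MeasurableSet S := by
    have : S = (Set.Icc (0:ℝ) w ×ˢ Set.Icc (0:ℝ) h) ∩ {p : ℝ × ℝ | p.1 * p.2 ≤ u ^ 2} := by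
      ext p; simp [hS, Set.mem_setOf_eq, and_assoc]
    rw [this]
    exact (measurableSet_Icc.prod measurableSet_Icc).inter
      (measurableSet_le (by fun_prop) measurable_const)
  have hslice : ∀ x ∈ Set.Ioc (0:ℝ) w,
      Prod.mk x ⁻¹' S = Set.Icc (0:ℝ) (min h (u ^ 2 / x)) := by
    intro x hx
    ext y
    simp only [Set.mem_preimage, hS, Set.mem_setOf_eq, Set.mem_prod, Set.mem_Icc,
      le_min_iff, Set.mem_Ioc] at *
    constructor
    · rintro ⟨⟨_, ⟨hy0, hyh⟩⟩, hxy⟩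
      exact ⟨hy0, hyh, (le_div_iff₀ hx.1).2 (by linarith [hxy, mul_comm x y])⟩
    · rintro ⟨hy0, hyh, hyd⟩
      refine ⟨⟨⟨le_of_lt hx.1, hx.2⟩, ⟨hy0, hyh⟩⟩, ?_⟩
      have := (le_div_iff₀ hx.1).1 hyd
      linarith [mul_comm x y]
  have hzero : ∀ x : ℝ, x ∉ Set.Icc (0:ℝ) w → Prod.mk x ⁻¹' S = ∅ := by
    intro x hx
    ext y
    simp only [Set.mem_preimage, hS, Set.mem_setOf_eq, Set.mem_prod, Set.mem_empty_iff_false,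
      iff_false]
    rintro ⟨⟨hx1, _⟩, _⟩
    exact hx hx1
  rw [Measure.volume_eq_prod, Measure.prod_apply hSmeas]
  have hcong : (fun x => volume (Prod.mk x ⁻¹' S)) =ᵐ[volume]
      (Set.Ioc (0:ℝ) w).indicator (fun x => ENNReal.ofReal (min h (u ^ 2 / x))) := by
    filter_upwards [compl_mem_ae_iff.2 (Real.volume_singleton (a := (0:ℝ)))] with x hx
    have hx' : x ≠ 0 := hx
    by_cases hxw : x ∈ Set.Ioc (0:ℝ) w
    · rw [hslice x hxw, Set.indicator_of_mem hxw, Real.volume_Icc]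
      norm_num
    · rw [Set.indicator_of_notMem hxw]
      have : x ∉ Set.Icc (0:ℝ) w := by
        simp only [Set.mem_Ioc, not_and_or, not_lt, not_le] at hxw
        simp only [Set.mem_Icc, not_and_or, not_le]
        rcases hxw with h1 | h2
        · left; exact lt_of_le_of_ne h1 hx'
        · right; exact h2
      rw [hzero x this]
      simp
  rw [lintegral_congr_ae hcong, lintegral_indicator measurableSet_Ioc]
  have hsplit : Set.Ioc (0:ℝ) w = Set.Ioc 0 a ∪ Set.Ioc a w :=
    (Set.Ioc_union_Ioc_eq_Ioc ha.le haw).symm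
  rw [hsplit, lintegral_union measurableSet_Ioc (Set.Ioc_disjoint_Ioc_of_le le_rfl)]
  have h1 : ∫⁻ x in Set.Ioc (0:ℝ) a, ENNReal.ofReal (min h (u ^ 2 / x)) =
      ENNReal.ofReal (u ^ 2) := by
    have : ∀ x ∈ Set.Ioc (0:ℝ) a, ENNReal.ofReal (min h (u ^ 2 / x)) = ENNReal.ofReal h := by
      intro x hx
      have hxa : x ≤ a := hx.2
      have hx0 : 0 < x := hx.1
      have : h ≤ u ^ 2 / x := by
        rw [le_div_iff₀ hx0]
        have := (div_le_iff₀ hh).1 (le_refl a)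
        calc h * x ≤ h * a := by nlinarith
          _ = u ^ 2 := by rw [ha_def]; field_simp
      rw [min_eq_left this]
    rw [setLIntegral_congr_fun measurableSet_Ioc this,
      setLIntegral_const, Real.volume_Ioc, ← ENNReal.ofReal_mul hh.le]
    congr 1
    rw [ha_def]; field_simp; ring
  have h2 : ∫⁻ x in Set.Ioc a w, ENNReal.ofReal (min h (u ^ 2 / x)) =
      ENNReal.ofReal (u ^ 2 * (Real.log (h * w) - Real.log (u ^ 2))) := by
    have hmin : ∀ x ∈ Set.Ioc a w, ENNReal.ofReal (min h (u ^ 2 / x)) =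
        ENNReal.ofReal (u ^ 2 / x) := by
      intro x hx
      have hx0 : 0 < x := lt_of_lt_of_le ha hx.1.le
      have : u ^ 2 / x ≤ h := by
        rw [div_le_iff₀ hx0]
        have hax : a ≤ x := hx.1.le
        calc u ^ 2 = h * a := by rw [ha_def]; field_simp
          _ ≤ h * x := by nlinarith
      rw [min_eq_right this]
    rw [setLIntegral_congr_fun measurableSet_Ioc hmin]
    have hint : IntegrableOn (fun x => u ^ 2 / x) (Set.Ioc a w) volume := by
      apply (ContinuousOn.integrableOn_Icc ?_).mono_set Set.Ioc_subset_Icc_self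
      intro x hx
      have : x ≠ 0 := by
        have : a ≤ x := hx.1
        exact (lt_of_lt_of_le ha this).ne'
      exact (continuousOn_const.div continuousOn_id (fun y hy =>
        (lt_of_lt_of_le ha hy.1).ne')) x hx
    rw [← ofReal_integral_eq_lintegral_ofReal hint]
    · congr 1
      have heq : ∫ x in Set.Ioc a w, u ^ 2 / x = ∫ x in a..w, u ^ 2 / x := by
        rw [intervalIntegral.integral_of_le haw]
      rw [heq]
      have : ∫ x in a..w, u ^ 2 / x = u ^ 2 * Real.log (w / a) := by
        simp_rw [div_eq_mul_inv]
        rw [intervalIntegral.integral_const_mul, integral_inv_of_pos ha hw, div_eq_mul_inv]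
      rw [this]
      have hlog : Real.log (w / a) = Real.log (h * w) - Real.log (u ^ 2) := by
        rw [Real.log_div hw.ne' ha.ne', ha_def, Real.log_div hu2.ne' hh.ne',
          Real.log_mul hh.ne' hw.ne']
        ring
      rw [hlog]
    · filter_upwards [ae_restrict_mem measurableSet_Ioc] with x hx
      exact div_nonneg hu2.le (lt_of_lt_of_le ha hx.1.le).le
  rw [h1, h2, ← ENNReal.ofReal_add hu2.le]
  · congr 1; ring
  · have : Real.log (u ^ 2) ≤ Real.log (h * w) := Real.log_le_log hu2 huhw
    nlinarith [this]
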